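/- Let G be a group, τ: G → G a group automorphism with τ∘τ = id, and γ ∈ G with τ(γ) = γ⁻¹. Define δ: G → G by δ(x) = γ⁻¹·τ(x)·γ, which is an involutive automorphism, and let G^δ be its fixed-point subgroup. Let H ⊆ J be subgroups of G with H normal in J, [J : H] finite, τ(J) = J and τ(H) = H. Write J^γ = γ⁻¹Jγ and H^γ = γ⁻¹Hγ. Assume [J : H] = [J ∩ G^δ : H ∩ G^δ]². Then the number of (H, J∩J^γ)-double cosets in J, multiplied by the number of (H∩J^γ, J∩G^δ)-double cosets in J∩J^γ, equals [J ∩ G^δ : H ∩ G^δ] (that is, the square root of [J : H]). -/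

import Mathlib

/-- The number of `(A, B)`-double cosets `A x B` with representative `x` running through `L`. -/
noncomputable def dosetCount {G : Type*} [Group G] (A L B : Set G) : ℕ :=
  Nat.card {S : Set G // ∃ x ∈ L, S = {y | ∃ a ∈ A, ∃ b ∈ B, y = a * x * b}}

section Aux

variable {G : Type*} [Group G]

lemma aux_mem_sup {H M J : Subgroup G} (hHJ : H ≤ J) (hMJ : M ≤ J)
    (hn : ∀ j ∈ J, ∀ h ∈ H, j * h * j⁻¹ ∈ H) (z : G) :
    z ∈ H ⊔ M ↔ ∃ a ∈ H, ∃ b ∈ M, z = a * b := by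
  constructor
  · intro hz
    let K : Subgroup G :=
      { carrier := {z | ∃ a ∈ H, ∃ b ∈ M, z = a * b}
        one_mem' := ⟨1, one_mem _, 1, one_mem _, (one_mul 1).symm⟩
        mul_mem' := by
          rintro x y ⟨a, ha, b, hb, rfl⟩ ⟨a', ha', b', hb', rfl⟩
          exact ⟨a * (b * a' * b⁻¹), mul_mem ha (hn b (hMJ hb) a' ha'), b * b',
            mul_mem hb hb', by group⟩
        inv_mem' := by
          rintro x ⟨a, ha, b, hb, rfl⟩
          exact ⟨b⁻¹ * a⁻¹ * b, by simpa using hn b⁻¹ (inv_mem (hMJ hb)) a⁻¹ (inv_mem ha),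
            b⁻¹, inv_mem hb, by group⟩ }
    have hK : H ⊔ M ≤ K :=
      sup_le (fun a ha => ⟨a, ha, 1, one_mem _, (mul_one a).symm⟩)
        (fun b hb => ⟨1, one_mem _, b, hb, (one_mul b).symm⟩)
    exact hK hz
  · rintro ⟨a, ha, b, hb, rfl⟩
    exact mul_mem ((le_sup_left : H ≤ H ⊔ M) ha) ((le_sup_right : M ≤ H ⊔ M) hb)

lemma doset_mul_subgroup (H M J : Subgroup G) (hHJ : H ≤ J) (hMJ : M ≤ J)
    (hn : ∀ j ∈ J, ∀ h ∈ H, j * h * j⁻¹ ∈ H) :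
    dosetCount (H : Set G) (J : Set G) (M : Set G) = (H ⊔ M).relIndex J := by
  classical
  let f : G → Set G := fun x => {y | ∃ a ∈ (H : Set G), ∃ b ∈ (M : Set G), y = a * x * b}
  have fmem : ∀ {x y : G}, x ∈ J → x⁻¹ * y ∈ H ⊔ M → y ∈ f x := by
    intro x y hx h
    obtain ⟨a, ha, b, hb, hab⟩ := (aux_mem_sup hHJ hMJ hn _).mp h
    have hy : y = x * (a * b) := by rw [← hab]; group
    exact ⟨x * a * x⁻¹, by simpa using hn x hx a ha, b, hb, by rw [hy]; group⟩
  have fsub : ∀ {x y : G}, y ∈ f x → f y ⊆ f x := by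
    rintro x y ⟨a0, ha0, b0, hb0, rfl⟩ z ⟨a, ha, b, hb, rfl⟩
    exact ⟨a * a0, mul_mem ha ha0, b0 * b, mul_mem hb0 hb, by group⟩
  have key : ∀ x ∈ J, ∀ y ∈ J, (f x = f y ↔ x⁻¹ * y ∈ H ⊔ M) := by
    intro x hx y hy
    constructor
    · intro hfe
      have hxy : x ∈ f y := hfe ▸ ⟨1, one_mem _, 1, one_mem _, by group⟩
      obtain ⟨a, ha, b, hb, hab⟩ := hxy
      have hy2 : y = a⁻¹ * x * b⁻¹ := by rw [hab]; group
      have h2 : x⁻¹ * y = (x⁻¹ * a⁻¹ * x) * b⁻¹ := by rw [hy2]; group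
      exact (aux_mem_sup hHJ hMJ hn _).mpr
        ⟨x⁻¹ * a⁻¹ * x, by simpa using hn x⁻¹ (inv_mem hx) a⁻¹ (inv_mem ha),
          b⁻¹, inv_mem hb, h2⟩
    · intro h
      have h1 : y ∈ f x := fmem hx h
      have h2 : x ∈ f y := fmem hy (by simpa [mul_inv_rev] using inv_mem h)
      exact Set.Subset.antisymm (fsub h2) (fsub h1)
  let K := (H ⊔ M).subgroupOf J
  let Φ : J ⧸ K → {S : Set G // ∃ x ∈ (J : Set G), S = f x} :=
    Quotient.lift (fun x : J => (⟨f x, x, x.2, rfl⟩ : {S : Set G // ∃ x ∈ (J : Set G), S = f x}))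
      (by
        intro x y hxy
        have h := QuotientGroup.leftRel_apply.mp hxy
        have h' : (x : G)⁻¹ * (y : G) ∈ H ⊔ M := by
          simpa using Subgroup.mem_subgroupOf.mp h
        exact Subtype.ext ((key x x.2 y y.2).mpr h'))
  have hΦ : Function.Bijective Φ := by
    constructor
    · intro x y
      refine Quotient.inductionOn₂ x y ?_
      intro a b hab
      have hfe : f a = f b := congrArg Subtype.val hab
      exact Quotient.sound (QuotientGroup.leftRel_apply.mpr
        (Subgroup.mem_subgroupOf.mpr (by simpa using (key a a.2 b b.2).mp hfe)))
    · rintro ⟨S, x, hx, rfl⟩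
      exact ⟨⟦⟨x, hx⟩⟧, rfl⟩
  have hcard := Nat.card_eq_of_bijective Φ hΦ
  show Nat.card {S : Set G // ∃ x ∈ (J : Set G), S = f x} = (H ⊔ M).relIndex J
  exact hcard.symm

lemma relindex_sup_eq (H M J : Subgroup G) (hHJ : H ≤ J) (hMJ : M ≤ J)
    (hn : ∀ j ∈ J, ∀ h ∈ H, j * h * j⁻¹ ∈ H) :
    H.relIndex (H ⊔ M) = H.relIndex M := by
  have hsJ : H ⊔ M ≤ J := sup_le hHJ hMJ
  have hnorm : (H.subgroupOf J).Normal := by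
    constructor
    intro n hn' g
    exact Subgroup.mem_subgroupOf.mpr
      (by simpa using hn g g.2 n (Subgroup.mem_subgroupOf.mp hn'))
  rw [← Subgroup.relIndex_subgroupOf hsJ, ← Subgroup.relIndex_subgroupOf hMJ,
    Subgroup.subgroupOf_sup hHJ hMJ]
  exact Subgroup.relIndex_sup_left _ _

end Aux

theorem stmt_11 {G : Type*} [Group G] (τ : G ≃* G) (hτ : ∀ x, τ (τ x) = x)
    (γ : G) (hγ : τ γ = γ⁻¹)
    (H J : Subgroup G) (hHJ : H ≤ J)
    (hnormal : ∀ j ∈ J, ∀ h ∈ H, j * h * j⁻¹ ∈ H)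
    (hfin : H.relIndex J ≠ 0)
    (hτJ : Subgroup.map τ.toMonoidHom J = J)
    (hτH : Subgroup.map τ.toMonoidHom H = H)
    (Jγ : Subgroup G) (hJγ : ∀ x, x ∈ Jγ ↔ γ * x * γ⁻¹ ∈ J)
    (Gδ : Subgroup G) (hGδ : ∀ x, x ∈ Gδ ↔ γ⁻¹ * τ x * γ = x)
    (hsq : H.relIndex J = ((H ⊓ Gδ).relIndex (J ⊓ Gδ)) ^ 2) :
    dosetCount (H : Set G) (J : Set G) ((J ⊓ Jγ : Subgroup G) : Set G) *
        dosetCount ((H ⊓ Jγ : Subgroup G) : Set G) ((J ⊓ Jγ : Subgroup G) : Set G)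
          ((J ⊓ Gδ : Subgroup G) : Set G)
      = (H ⊓ Gδ).relIndex (J ⊓ Gδ) := by
  have hτJ' : ∀ x ∈ J, τ x ∈ J := fun x hx => hτJ ▸ ⟨x, hx, rfl⟩
  have hτH' : ∀ x ∈ H, τ x ∈ H := fun x hx => hτH ▸ ⟨x, hx, rfl⟩
  set M := J ⊓ Jγ with hM
  set A := H ⊓ Jγ with hA
  set B := J ⊓ Gδ with hB
  set n := (H ⊓ Gδ).relIndex B with hn
  -- J ⊓ Gδ ≤ Jγ
  have hconj : ∀ x ∈ Gδ, γ * x * γ⁻¹ = τ x := by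
    intro x hx
    have hfix := (hGδ x).mp hx
    conv_lhs => rw [← hfix]
    group
  have hBJγ : B ≤ Jγ := by
    intro x hx
    rw [hB, Subgroup.mem_inf] at hx
    rw [hJγ, hconj x hx.2]
    exact hτJ' x hx.1
  have hHGδJγ : H ⊓ Gδ ≤ Jγ := by
    intro x hx
    rw [Subgroup.mem_inf] at hx
    rw [hJγ, hconj x hx.2]
    exact hHJ (hτH' x hx.1)
  have hMJ : M ≤ J := inf_le_left
  have hAM : A ≤ M := inf_le_inf_right Jγ hHJ
  have hBM : B ≤ M := le_inf inf_le_left hBJγ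
  have hnA : ∀ j ∈ M, ∀ h ∈ A, j * h * j⁻¹ ∈ A := by
    intro j hj h hh
    rw [hM, Subgroup.mem_inf] at hj
    rw [hA, Subgroup.mem_inf] at hh ⊢
    exact ⟨hnormal j hj.1 h hh.1, mul_mem (mul_mem hj.2 hh.2) (inv_mem hj.2)⟩
  rw [doset_mul_subgroup H M J hHJ hMJ hnormal, doset_mul_subgroup A B M hAM hBM hnA]
  -- index arithmetic
  have e1 : H.relIndex (H ⊔ M) * (H ⊔ M).relIndex J = H.relIndex J :=
    Subgroup.relIndex_mul_relIndex H (H ⊔ M) J le_sup_left (sup_le hHJ hMJ)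
  have e2 : H.relIndex (H ⊔ M) = H.relIndex M := relindex_sup_eq H M J hHJ hMJ hnormal
  have hHM : H ⊓ M = A := by rw [hM, hA, ← inf_assoc, inf_eq_left.mpr hHJ]
  have e6 : H.relIndex M = A.relIndex M := by
    rw [← Subgroup.inf_relIndex_right H M, hHM, ← Subgroup.inf_relIndex_right A M,
      inf_eq_left.mpr hAM]
  have e3 : A.relIndex (A ⊔ B) * (A ⊔ B).relIndex M = A.relIndex M :=
    Subgroup.relIndex_mul_relIndex A (A ⊔ B) M le_sup_left (sup_le hAM hBM)
  have e4 : A.relIndex (A ⊔ B) = A.relIndex B := relindex_sup_eq A B M hAM hBM hnA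
  have hABeq : A ⊓ B = H ⊓ Gδ := by
    rw [hA, hB]
    apply le_antisymm
    · exact le_inf (inf_le_left.trans inf_le_left) (inf_le_right.trans inf_le_right)
    · exact le_inf (le_inf inf_le_left hHGδJγ)
        (le_inf (inf_le_left.trans hHJ) inf_le_right)
  have e5 : A.relIndex B = n := by
    rw [hn, ← Subgroup.inf_relIndex_right A B, hABeq]
  have hnne : n ≠ 0 := by
    intro h0
    rw [h0] at hsq
    simp at hsq
    exact hfin hsq
  have big : n * ((A ⊔ B).relIndex M * (H ⊔ M).relIndex J) = n * n := by
    have : H.relIndex J = n * (A ⊔ B).relIndex M * (H ⊔ M).relIndex J := by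
      rw [← e1, e2, e6, ← e3, e4, e5]
    rw [hsq] at this
    rw [← mul_assoc, ← this, hn]
    ring
  have := Nat.eq_of_mul_eq_mul_left (Nat.pos_of_ne_zero hnne) big
  rw [hn] at this ⊢
  rw [mul_comm]
  exact this
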